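/- Let a, b be nonzero vectors in R^n. Then the trace of the positive part of M = a bᵀ + b aᵀ equals ‖a‖‖b‖(1 + cos θ) and the trace of the negative part equals ‖a‖‖b‖(1 − cos θ), where cos θ = ⟨a,b⟩/(‖a‖‖b‖). -/

import Mathlib

open Matrix

noncomputable def vnorm {n : ℕ} (a : Fin n → ℝ) : ℝ := Real.sqrt (∑ i, a i ^ 2)

noncomputable def cosAngle {n : ℕ} (a b : Fin n → ℝ) : ℝ :=
  (∑ i, a i * b i) / (vnorm a * vnorm b)

lemma vmv_mul {n : ℕ} (a b c d : Fin n → ℝ) :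
    Matrix.vecMulVec a b * Matrix.vecMulVec c d
      = (∑ i, b i * c i) • Matrix.vecMulVec a d := by
  ext i j
  simp only [Matrix.mul_apply, Matrix.vecMulVec_apply, Matrix.smul_apply, smul_eq_mul,
    Finset.sum_mul]
  apply Finset.sum_congr rfl
  intro k _
  ring

lemma trace_vmv {n : ℕ} (a b : Fin n → ℝ) :
    (Matrix.vecMulVec a b).trace = ∑ i, a i * b i := by
  simp [Matrix.trace, Matrix.diag, Matrix.vecMulVec_apply]

lemma psd_vmv_self {n : ℕ} (a : Fin n → ℝ) : (Matrix.vecMulVec a a).PosSemidef := by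
  refine Matrix.PosSemidef.of_dotProduct_mulVec_nonneg ?_ ?_
  · ext i j
    simp [Matrix.vecMulVec_apply, mul_comm]
  · intro x
    have hkey : (star x) ⬝ᵥ (Matrix.vecMulVec a a *ᵥ x) = (∑ i, a i * x i) ^ 2 := by
      simp only [dotProduct, Matrix.mulVec, Matrix.vecMulVec_apply, star_trivial,
        Pi.star_apply]
      rw [sq, Finset.sum_mul]
      apply Finset.sum_congr rfl
      intro i _
      rw [Finset.mul_sum, Finset.mul_sum]
      apply Finset.sum_congr rfl
      intro j _
      ring
    rw [hkey]
    positivity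

lemma psd_smul {n : ℕ} {A : Matrix (Fin n) (Fin n) ℝ} (hA : A.PosSemidef) {c : ℝ}
    (hc : 0 ≤ c) : (c • A).PosSemidef := by
  refine Matrix.PosSemidef.of_dotProduct_mulVec_nonneg ?_ ?_
  · rw [Matrix.IsHermitian, Matrix.conjTranspose_smul, hA.1, star_trivial]
  · intro x
    rw [Matrix.smul_mulVec, dotProduct_smul, smul_eq_mul]
    exact mul_nonneg hc (hA.dotProduct_mulVec_nonneg x)

theorem trace_pos_neg_parts {n : ℕ} (a b : Fin n → ℝ) (ha : a ≠ 0) (hb : b ≠ 0)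
    (M Mp Mn : Matrix (Fin n) (Fin n) ℝ)
    (hM : M = Matrix.vecMulVec a b + Matrix.vecMulVec b a)
    (hMp : Mp.PosSemidef) (hMn : Mn.PosSemidef)
    (hsplit : M = Mp - Mn) (horth : Mp * Mn = 0) :
    Mp.trace = vnorm a * vnorm b * (1 + cosAngle a b) ∧
    Mn.trace = vnorm a * vnorm b * (1 - cosAngle a b) := by
  set s : ℝ := ∑ i, a i * b i with hs
  set na : ℝ := ∑ i, a i ^ 2 with hna
  set nb : ℝ := ∑ i, b i ^ 2 with hnb
  have hna0 : 0 < na := by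
    rcases Function.ne_iff.mp ha with ⟨i, hi⟩
    exact Finset.sum_pos' (fun j _ => sq_nonneg _)
      ⟨i, Finset.mem_univ i, lt_of_le_of_ne (sq_nonneg _) (Ne.symm (pow_ne_zero 2 hi))⟩
  have hnb0 : 0 < nb := by
    rcases Function.ne_iff.mp hb with ⟨i, hi⟩
    exact Finset.sum_pos' (fun j _ => sq_nonneg _)
      ⟨i, Finset.mem_univ i, lt_of_le_of_ne (sq_nonneg _) (Ne.symm (pow_ne_zero 2 hi))⟩
  set p : ℝ := vnorm a * vnorm b with hp
  have hp0 : 0 < p := by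
    rw [hp, vnorm, vnorm, ← hna, ← hnb]
    positivity
  have hpsq : p ^ 2 = na * nb := by
    rw [hp, vnorm, vnorm, ← hna, ← hnb, mul_pow, Real.sq_sqrt hna0.le, Real.sq_sqrt hnb0.le]
  have hba : ∑ i, b i * a i = s := by
    rw [hs]; apply Finset.sum_congr rfl; intro i _; ring
  have h1 : ∑ i, a i * a i = na := by
    rw [hna]; apply Finset.sum_congr rfl; intro i _; ring
  have h2 : ∑ i, b i * b i = nb := by
    rw [hnb]; apply Finset.sum_congr rfl; intro i _; ring
  set A : Matrix (Fin n) (Fin n) ℝ := Matrix.vecMulVec a a with hA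
  set B : Matrix (Fin n) (Fin n) ℝ := Matrix.vecMulVec b b with hB
  -- M squared
  have hM2 : M ^ 2 = s • M + nb • A + na • B := by
    rw [sq, hM, add_mul, mul_add, mul_add, vmv_mul, vmv_mul, vmv_mul, vmv_mul,
      hba, h1, h2, ← hs, ← hA, ← hB]
    module
  -- T
  set T : Matrix (Fin n) (Fin n) ℝ := p⁻¹ • (nb • A + na • B) with hT
  have hTpsd : T.PosSemidef := by
    refine psd_smul ?_ (by positivity)
    exact (psd_smul (psd_vmv_self a) hnb0.le).add (psd_smul (psd_vmv_self b) hna0.le)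
  have hQQ : (nb • A + na • B) * (nb • A + na • B)
      = (na * nb) • (s • M + nb • A + na • B) := by
    rw [add_mul, mul_add, mul_add, Matrix.smul_mul, Matrix.smul_mul, Matrix.smul_mul,
      Matrix.smul_mul, Matrix.mul_smul, Matrix.mul_smul, Matrix.mul_smul, Matrix.mul_smul,
      hA, hB, vmv_mul, vmv_mul, vmv_mul, vmv_mul, hba, h1, h2, ← hs, hM, ← hA, ← hB]
    module
  have hT2 : T ^ 2 = M ^ 2 := by
    rw [hT, sq, Matrix.smul_mul, Matrix.mul_smul, smul_smul, hQQ, smul_smul, hM2]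
    have : p⁻¹ * p⁻¹ * (na * nb) = 1 := by
      rw [← hpsq, sq]
      field_simp
    rw [this, one_smul]
  -- S
  set S : Matrix (Fin n) (Fin n) ℝ := Mp + Mn with hS
  have hSpsd : S.PosSemidef := hMp.add hMn
  have hMnMp : Mn * Mp = 0 := by
    have := congrArg Matrix.conjTranspose horth
    rwa [Matrix.conjTranspose_mul, hMp.1, hMn.1, Matrix.conjTranspose_zero] at this
  have hS2 : S ^ 2 = M ^ 2 := by
    rw [hS, hsplit, sq, sq, add_mul, mul_add, mul_add, sub_mul, mul_sub, mul_sub,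
      horth, hMnMp]
    abel
  have hST : S = T := by
    open scoped MatrixOrder in
    exact (CFC.sq_eq_sq_iff S T hSpsd.nonneg hTpsd.nonneg).mp (hS2.trans hT2.symm)
  -- traces
  have htrT : T.trace = 2 * p := by
    rw [hT, Matrix.trace_smul, Matrix.trace_add, Matrix.trace_smul, Matrix.trace_smul,
      hA, hB, trace_vmv, trace_vmv, h1, h2]
    have h3 : nb * na + na * nb = p * (2 * p) := by nlinarith [hpsq]
    rw [smul_eq_mul, smul_eq_mul, smul_eq_mul, h3, inv_mul_cancel_left₀ hp0.ne']
  have htrM : M.trace = 2 * s := by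
    rw [hM, Matrix.trace_add, trace_vmv, trace_vmv, hba, ← hs]
    ring
  have e1 : Mp.trace + Mn.trace = 2 * p := by
    rw [← Matrix.trace_add, ← hS, hST, htrT]
  have e2 : Mp.trace - Mn.trace = 2 * s := by
    rw [← Matrix.trace_sub, ← hsplit, htrM]
  have hcos : cosAngle a b = s / p := by rw [cosAngle, ← hs, ← hp]
  constructor
  · rw [hcos]
    have : Mp.trace = p + s := by linarith
    rw [this]
    field_simp
  · rw [hcos]
    have : Mn.trace = p - s := by linarith
    rw [this]
    field_simp
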